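/- arXiv:2008.05538 — 2 statements merged into one kernel-verified Lean document; each statement's English description precedes it below -/
import Mathlib

section
/- Let F, f, (θ_F, ρ_f) be as in the GNS-like theorem for *-bimodules. If (θ,ρ) is another *-representation of X on an inner product space D with an algebraically cyclic vector ψ for ρ satisfying f(a) = (ρ(a)ψ, ψ) and F(a·x·b) = (θ(x)ρ(b)ψ, ρ(a⁺)ψ) for all a,b ∈ A, x ∈ X, then there is a unitary U from the Hilbert completion H_f onto that of D with Uφ_f = ψ, U D_f = D, ρ(a) = Uρ_f(a)U⁻¹ and θ(x) = Uθ_F(x)U⁻¹ for all a ∈ A, x ∈ X. -/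
open scoped ComplexInnerProductSpace


private lemma gns_unique_helper {H : Type*} [NormedAddCommGroup H] [InnerProductSpace ℂ H]
    {A : Type*} [Ring A] [Algebra ℂ A] [StarRing A] [StarModule ℂ A]
    (f : A →ₗ[ℂ] ℂ) (D : Submodule ℂ H) (g : A → H)
    (hmem : ∀ a, g a ∈ D) (hsurj : ∀ v ∈ D, ∃ d : A, g d = v)
    (hk : ∀ a b : A, ⟪g a, g b⟫ = (starRingEnd ℂ) (f (star b * a))) :
    IsLinearMap ℂ g := by
  have hz : ∀ v ∈ D, (∀ c : A, ⟪g c, v⟫ = 0) → v = 0 := by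
    intro v hv h
    obtain ⟨d, hd⟩ := hsurj v hv
    exact inner_self_eq_zero.mp (hd ▸ h d)
  constructor
  · intro a b
    have h0 : g (a + b) - (g a + g b) = 0 := by
      refine hz _ (sub_mem (hmem _) (add_mem (hmem _) (hmem _))) fun c => ?_
      rw [inner_sub_right, inner_add_right, hk, hk, hk, star_add, add_mul, map_add, map_add]
      ring
    exact sub_eq_zero.mp h0
  · intro t a
    have h0 : g (t • a) - t • g a = 0 := by
      refine hz _ (sub_mem (hmem _) (Submodule.smul_mem _ _ (hmem _))) fun c => ?_
      rw [inner_sub_right, inner_smul_right, hk, hk, star_smul, smul_mul_assoc, map_smul,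
        smul_eq_mul, map_mul]
      simp only [starRingEnd_apply, star_star]
      ring
    exact sub_eq_zero.mp h0

/-- uniqueness in the GNS-like theorem: if `(θf, ρf)` (with cyclic
vector `φf`) and `(θ, ρ)` (with algebraically cyclic vector `ψ`) are two
`*`-representations of the `*`-bimodule `X` reproducing the same functionals
`f` on `A` and `F` on `X`, then there is a unitary `U` of the Hilbert space
completion `H₁` onto `H₂` with `Uφf = ψ`, `U D₁ = D₂`, `ρ(a) = U ρf(a) U⁻¹`
and `θ(x) = U θf(x) U⁻¹`.
(The paper's inner product `⟨u,v⟩`, linear in `u`, is written as Mathlib's `⟪v, u⟫`.) -/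
theorem gns_like_uniqueness
    {A X : Type*} [Ring A] [Algebra ℂ A] [StarRing A] [StarModule ℂ A]
    [AddCommGroup X] [Module ℂ X]
    (s : X → X)
    (hs_invol : ∀ x : X, s (s x) = x)
    (l : A → X → X) (r : X → A → X)
    (hl_one : ∀ x, l 1 x = x) (hl_mul : ∀ a b x, l a (l b x) = l (a * b) x)
    (hr_one : ∀ x, r x 1 = x) (hr_mul : ∀ a b x, r (r x a) b = r x (a * b))
    (h_comm : ∀ a b x, r (l a x) b = l a (r x b))
    (h_star : ∀ (a b : A) (x : X), s (l a (r x b)) = l (star b) (r (s x) (star a)))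
    (F : X →ₗ[ℂ] ℂ) (hF_her : ∀ x : X, F (s x) = (starRingEnd ℂ) (F x))
    (f : A →ₗ[ℂ] ℂ) (hf_pos : ∀ a : A, 0 ≤ (f (star a * a)).re ∧ (f (star a * a)).im = 0)
    (h_dom : ∀ x : X, ∃ C : ℝ, 0 < C ∧
      ∀ a : A, ‖F (l (star a) x)‖ ^ 2 ≤ C * (f (star a * a)).re)
    -- the GNS-like representation (θf, ρf) on D₁ ⊆ H₁ with cyclic vector φf
    {H₁ : Type*} [NormedAddCommGroup H₁] [InnerProductSpace ℂ H₁] [CompleteSpace H₁]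
    (D₁ : Submodule ℂ H₁) (hD₁ : Dense (D₁ : Set H₁))
    (ρf : A → (D₁ →ₗ[ℂ] D₁)) (θf : X →ₗ[ℂ] (D₁ →ₗ[ℂ] H₁))
    (hρf_one : ρf 1 = LinearMap.id)
    (hρf_mul : ∀ a b : A, ρf (a * b) = (ρf a) ∘ₗ (ρf b))
    (hρf_adj : ∀ (a : A) (ξ η : D₁), ⟪(η : H₁), (ρf a ξ : H₁)⟫ = ⟪(ρf (star a) η : H₁), (ξ : H₁)⟫)
    (hθf_star : ∀ (x : X) (ξ η : D₁), ⟪(η : H₁), θf (s x) ξ⟫ = ⟪θf x η, (ξ : H₁)⟫)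
    (hrepf : ∀ (a b : A) (x : X) (ξ η : D₁),
      ⟪(η : H₁), θf (l a (r x b)) ξ⟫ = ⟪(ρf (star a) η : H₁), θf x (ρf b ξ)⟫)
    (φf : D₁) (hcyc₁ : ∀ ξ : D₁, ∃ a : A, ρf a φf = ξ)
    (hf_eq₁ : ∀ a : A, f a = ⟪(φf : H₁), (ρf a φf : H₁)⟫)
    (hF_eq₁ : ∀ (a b : A) (x : X), F (l a (r x b)) = ⟪(ρf (star a) φf : H₁), θf x (ρf b φf)⟫)
    -- another *-representation (θ, ρ) on D₂ ⊆ H₂ with algebraically cyclic vector ψ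
    {H₂ : Type*} [NormedAddCommGroup H₂] [InnerProductSpace ℂ H₂] [CompleteSpace H₂]
    (D₂ : Submodule ℂ H₂) (hD₂ : Dense (D₂ : Set H₂))
    (ρ : A → (D₂ →ₗ[ℂ] D₂)) (θ : X →ₗ[ℂ] (D₂ →ₗ[ℂ] H₂))
    (hρ_one : ρ 1 = LinearMap.id)
    (hρ_mul : ∀ a b : A, ρ (a * b) = (ρ a) ∘ₗ (ρ b))
    (hρ_adj : ∀ (a : A) (ξ η : D₂), ⟪(η : H₂), (ρ a ξ : H₂)⟫ = ⟪(ρ (star a) η : H₂), (ξ : H₂)⟫)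
    (hθ_star : ∀ (x : X) (ξ η : D₂), ⟪(η : H₂), θ (s x) ξ⟫ = ⟪θ x η, (ξ : H₂)⟫)
    (hrep : ∀ (a b : A) (x : X) (ξ η : D₂),
      ⟪(η : H₂), θ (l a (r x b)) ξ⟫ = ⟪(ρ (star a) η : H₂), θ x (ρ b ξ)⟫)
    (ψ : D₂) (hcyc₂ : ∀ ξ : D₂, ∃ a : A, ρ a ψ = ξ)
    (hf_eq₂ : ∀ a : A, f a = ⟪(ψ : H₂), (ρ a ψ : H₂)⟫)
    (hF_eq₂ : ∀ (a b : A) (x : X), F (l a (r x b)) = ⟪(ρ (star a) ψ : H₂), θ x (ρ b ψ)⟫) :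
    ∃ U : H₁ ≃ₗᵢ[ℂ] H₂,
      U (φf : H₁) = (ψ : H₂) ∧
      U '' (D₁ : Set H₁) = (D₂ : Set H₂) ∧
      (∀ (a : A) (η : D₁) (η' : D₂), U (η : H₁) = (η' : H₂) →
        U (ρf a η : H₁) = (ρ a η' : H₂)) ∧
      (∀ (x : X) (η : D₁) (η' : D₂), U (η : H₁) = (η' : H₂) →
        U (θf x η) = θ x η') := by
  classical
  let g₁ : A → H₁ := fun a => ((ρf a φf : D₁) : H₁)
  let g₂ : A → H₂ := fun a => ((ρ a ψ : D₂) : H₂)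
  have k₁ : ∀ a b : A, ⟪g₁ a, g₁ b⟫ = (starRingEnd ℂ) (f (star b * a)) := by
    intro a b
    have h1 := hρf_adj b φf (ρf a φf)
    have h2 : ((ρf (star b) (ρf a φf) : D₁) : H₁) = g₁ (star b * a) := by
      show _ = ((ρf (star b * a) φf : D₁) : H₁)
      rw [hρf_mul]; rfl
    rw [h2] at h1
    rw [h1, ← inner_conj_symm, ← hf_eq₁]
  have k₂ : ∀ a b : A, ⟪g₂ a, g₂ b⟫ = (starRingEnd ℂ) (f (star b * a)) := by
    intro a b
    have h1 := hρ_adj b ψ (ρ a ψ)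
    have h2 : ((ρ (star b) (ρ a ψ) : D₂) : H₂) = g₂ (star b * a) := by
      show _ = ((ρ (star b * a) ψ : D₂) : H₂)
      rw [hρ_mul]; rfl
    rw [h2] at h1
    rw [h1, ← inner_conj_symm, ← hf_eq₂]
  have mem₁ : ∀ a : A, g₁ a ∈ D₁ := fun a => (ρf a φf).2
  have mem₂ : ∀ a : A, g₂ a ∈ D₂ := fun a => (ρ a ψ).2
  have surj₁ : ∀ v ∈ D₁, ∃ d : A, g₁ d = v := by
    intro v hv; obtain ⟨a, ha⟩ := hcyc₁ ⟨v, hv⟩; exact ⟨a, congrArg Subtype.val ha⟩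
  have surj₂ : ∀ v ∈ D₂, ∃ d : A, g₂ d = v := by
    intro v hv; obtain ⟨a, ha⟩ := hcyc₂ ⟨v, hv⟩; exact ⟨a, congrArg Subtype.val ha⟩
  have lin₁ := gns_unique_helper f D₁ g₁ mem₁ surj₁ k₁
  have lin₂ := gns_unique_helper f D₂ g₂ mem₂ surj₂ k₂
  have key : ∀ a b : A, ⟪g₂ a, g₂ b⟫ = ⟪g₁ a, g₁ b⟫ := fun a b => (k₂ a b).trans (k₁ a b).symm
  have sub₁ : ∀ a b : A, g₁ (a - b) = g₁ a - g₁ b := (IsLinearMap.mk' g₁ lin₁).map_sub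
  have sub₂ : ∀ a b : A, g₂ (a - b) = g₂ a - g₂ b := (IsLinearMap.mk' g₂ lin₂).map_sub
  have transfer : ∀ a b : A, g₁ a = g₁ b → g₂ a = g₂ b := by
    intro a b h
    have h0 : g₂ (a - b) = 0 := by
      have hh : ⟪g₂ (a - b), g₂ (a - b)⟫ = (0 : ℂ) := by
        rw [key, sub₁, h, sub_self, inner_zero_right]
      exact inner_self_eq_zero.mp hh
    rw [sub₂] at h0
    exact sub_eq_zero.mp h0
  have transfer' : ∀ a b : A, g₂ a = g₂ b → g₁ a = g₁ b := by
    intro a b h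
    have h0 : g₁ (a - b) = 0 := by
      have hh : ⟪g₁ (a - b), g₁ (a - b)⟫ = (0 : ℂ) := by
        rw [← key, sub₂, h, sub_self, inner_zero_right]
      exact inner_self_eq_zero.mp hh
    rw [sub₁] at h0
    exact sub_eq_zero.mp h0
  have normkey : ∀ a : A, ‖g₂ a‖ = ‖g₁ a‖ := by
    intro a
    rw [norm_eq_sqrt_re_inner (𝕜 := ℂ), norm_eq_sqrt_re_inner (𝕜 := ℂ), key]
  choose ch₁ hch₁ using hcyc₁
  choose ch₂ hch₂ using hcyc₂
  have hg₁ch : ∀ ξ : D₁, g₁ (ch₁ ξ) = (ξ : H₁) := fun ξ => congrArg Subtype.val (hch₁ ξ)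
  have hg₂ch : ∀ η : D₂, g₂ (ch₂ η) = (η : H₂) := fun η => congrArg Subtype.val (hch₂ η)
  let U₀ : D₁ →ₗ[ℂ] D₂ :=
    { toFun := fun ξ => ρ (ch₁ ξ) ψ
      map_add' := by
        intro ξ η
        apply Subtype.coe_injective
        show g₂ (ch₁ (ξ + η)) = ((ρ (ch₁ ξ) ψ + ρ (ch₁ η) ψ : D₂) : H₂)
        rw [Submodule.coe_add]
        calc g₂ (ch₁ (ξ + η)) = g₂ (ch₁ ξ + ch₁ η) := by
              refine transfer _ _ ?_
              rw [hg₁ch, lin₁.map_add, hg₁ch, hg₁ch, Submodule.coe_add]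
          _ = g₂ (ch₁ ξ) + g₂ (ch₁ η) := lin₂.map_add _ _
      map_smul' := by
        intro t ξ
        apply Subtype.coe_injective
        show g₂ (ch₁ (t • ξ)) = ((t • ρ (ch₁ ξ) ψ : D₂) : H₂)
        rw [Submodule.coe_smul]
        calc g₂ (ch₁ (t • ξ)) = g₂ (t • ch₁ ξ) := by
              refine transfer _ _ ?_
              rw [hg₁ch, lin₁.map_smul, hg₁ch, Submodule.coe_smul]
          _ = t • g₂ (ch₁ ξ) := lin₂.map_smul _ _ }
  let V₀ : D₂ →ₗ[ℂ] D₁ :=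
    { toFun := fun η => ρf (ch₂ η) φf
      map_add' := by
        intro ξ η
        apply Subtype.coe_injective
        show g₁ (ch₂ (ξ + η)) = ((ρf (ch₂ ξ) φf + ρf (ch₂ η) φf : D₁) : H₁)
        rw [Submodule.coe_add]
        calc g₁ (ch₂ (ξ + η)) = g₁ (ch₂ ξ + ch₂ η) := by
              refine transfer' _ _ ?_
              rw [hg₂ch, lin₂.map_add, hg₂ch, hg₂ch, Submodule.coe_add]
          _ = g₁ (ch₂ ξ) + g₁ (ch₂ η) := lin₁.map_add _ _
      map_smul' := by
        intro t ξ
        apply Subtype.coe_injective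
        show g₁ (ch₂ (t • ξ)) = ((t • ρf (ch₂ ξ) φf : D₁) : H₁)
        rw [Submodule.coe_smul]
        calc g₁ (ch₂ (t • ξ)) = g₁ (t • ch₂ ξ) := by
              refine transfer' _ _ ?_
              rw [hg₂ch, lin₂.map_smul, hg₂ch, Submodule.coe_smul]
          _ = t • g₁ (ch₂ ξ) := lin₁.map_smul _ _ }
  have hU₀coe : ∀ ξ : D₁, ((U₀ ξ : D₂) : H₂) = g₂ (ch₁ ξ) := fun _ => rfl
  have hV₀coe : ∀ η : D₂, ((V₀ η : D₁) : H₁) = g₁ (ch₂ η) := fun _ => rfl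
  have hnormU : ∀ ξ : D₁, ‖((U₀ ξ : D₂) : H₂)‖ = ‖(ξ : H₁)‖ := fun ξ => by
    rw [hU₀coe, normkey, hg₁ch]
  have hnormV : ∀ η : D₂, ‖((V₀ η : D₁) : H₁)‖ = ‖(η : H₂)‖ := fun η => by
    rw [hV₀coe, ← normkey, hg₂ch]
  let T₁ : D₁ →L[ℂ] H₂ := LinearMap.mkContinuous (D₂.subtype ∘ₗ U₀) 1 (fun ξ => by
    rw [one_mul]; exact le_of_eq (hnormU ξ))
  let T₂ : D₂ →L[ℂ] H₁ := LinearMap.mkContinuous (D₁.subtype ∘ₗ V₀) 1 (fun η => by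
    rw [one_mul]; exact le_of_eq (hnormV η))
  have hde₁ : DenseRange (D₁.subtypeL) := hD₁.denseRange_val
  have hde₂ : DenseRange (D₂.subtypeL) := hD₂.denseRange_val
  have hui₁ : IsUniformInducing (D₁.subtypeL) := isometry_subtype_coe.isUniformInducing
  have hui₂ : IsUniformInducing (D₂.subtypeL) := isometry_subtype_coe.isUniformInducing
  let Uc : H₁ →L[ℂ] H₂ := T₁.extend D₁.subtypeL
  let Vc : H₂ →L[ℂ] H₁ := T₂.extend D₂.subtypeL
  have hUcD : ∀ ξ : D₁, Uc (ξ : H₁) = ((U₀ ξ : D₂) : H₂) := fun ξ =>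
    ContinuousLinearMap.extend_eq T₁ (e := D₁.subtypeL) hde₁ hui₁ ξ
  have hVcD : ∀ η : D₂, Vc (η : H₂) = ((V₀ η : D₁) : H₁) := fun η =>
    ContinuousLinearMap.extend_eq T₂ (e := D₂.subtypeL) hde₂ hui₂ η
  have hVU : ∀ y : H₁, Vc (Uc y) = y := by
    have hfun : (fun y : H₁ => Vc (Uc y)) = fun y => y := by
      refine Continuous.ext_on hD₁ (Vc.continuous.comp Uc.continuous) continuous_id
        fun y hy => ?_
      rw [hUcD ⟨y, hy⟩, hVcD (U₀ ⟨y, hy⟩), hV₀coe]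
      have h2 : g₂ (ch₂ (U₀ ⟨y, hy⟩)) = g₂ (ch₁ ⟨y, hy⟩) := hg₂ch _
      rw [transfer' _ _ h2, hg₁ch]
    exact fun y => congrFun hfun y
  have hUV : ∀ y : H₂, Uc (Vc y) = y := by
    have hfun : (fun y : H₂ => Uc (Vc y)) = fun y => y := by
      refine Continuous.ext_on hD₂ (Uc.continuous.comp Vc.continuous) continuous_id
        fun y hy => ?_
      rw [hVcD ⟨y, hy⟩, hUcD (V₀ ⟨y, hy⟩), hU₀coe]
      have h2 : g₁ (ch₁ (V₀ ⟨y, hy⟩)) = g₁ (ch₂ ⟨y, hy⟩) := hg₁ch _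
      rw [transfer _ _ h2, hg₂ch]
    exact fun y => congrFun hfun y
  have hnormUc : ∀ y : H₁, ‖Uc y‖ = ‖y‖ := by
    have hfun : (fun y : H₁ => ‖Uc y‖) = fun y => ‖y‖ := by
      refine Continuous.ext_on hD₁ (Uc.continuous.norm) continuous_norm fun y hy => ?_
      rw [hUcD ⟨y, hy⟩]
      exact hnormU ⟨y, hy⟩
    exact fun y => congrFun hfun y
  let U : H₁ ≃ₗᵢ[ℂ] H₂ :=
    { toLinearEquiv := LinearEquiv.ofLinear Uc.toLinearMap Vc.toLinearMap
        (LinearMap.ext hUV) (LinearMap.ext hVU)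
      norm_map' := hnormUc }
  have hUapp : ∀ y : H₁, U y = Uc y := fun _ => rfl
  have hUg : ∀ c : A, U (g₁ c) = g₂ c := by
    intro c
    rw [hUapp, show g₁ c = ((ρf c φf : D₁) : H₁) from rfl, hUcD (ρf c φf), hU₀coe]
    exact transfer _ _ (hg₁ch (ρf c φf))
  refine ⟨U, ?_, ?_, ?_, ?_⟩
  · have h1 : (φf : H₁) = g₁ 1 := by
      show _ = ((ρf 1 φf : D₁) : H₁); rw [hρf_one]; rfl
    have h2 : g₂ 1 = (ψ : H₂) := by
      show ((ρ 1 ψ : D₂) : H₂) = _; rw [hρ_one]; rfl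
    rw [h1, hUg, h2]
  · ext y
    constructor
    · rintro ⟨z, hz, rfl⟩
      rw [hUapp, hUcD ⟨z, hz⟩]
      exact (U₀ ⟨z, hz⟩).2
    · intro hy
      refine ⟨g₁ (ch₂ ⟨y, hy⟩), mem₁ _, ?_⟩
      rw [hUg]
      exact hg₂ch ⟨y, hy⟩
  · intro a η η' hUη
    have hη' : η' = ρ (ch₁ η) ψ := by
      apply Subtype.coe_injective
      show (η' : H₂) = ((ρ (ch₁ η) ψ : D₂) : H₂)
      rw [← hUη, hUapp, hUcD η, hU₀coe]
    have h2 : ((ρf a η : D₁) : H₁) = g₁ (a * ch₁ η) := by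
      show _ = ((ρf (a * ch₁ η) φf : D₁) : H₁)
      conv_lhs => rw [← hch₁ η]
      rw [hρf_mul]
      rfl
    rw [h2, hUg, hη']
    show ((ρ (a * ch₁ η) ψ : D₂) : H₂) = ((ρ a (ρ (ch₁ η) ψ) : D₂) : H₂)
    rw [hρ_mul]
    rfl
  · intro x η η' hUη
    have hη' : η' = ρ (ch₁ η) ψ := by
      apply Subtype.coe_injective
      show (η' : H₂) = ((ρ (ch₁ η) ψ : D₂) : H₂)
      rw [← hUη, hUapp, hUcD η, hU₀coe]
    refine hD₂.denseRange_val.eq_of_inner_right ℂ fun v => ?_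
    calc ⟪(v : H₂), U (θf x η)⟫
        = ⟪U (g₁ (ch₂ v)), U (θf x η)⟫ := by rw [hUg, hg₂ch]
      _ = ⟪g₁ (ch₂ v), θf x η⟫ := U.inner_map_map _ _
      _ = F (l (star (ch₂ v)) (r x (ch₁ η))) := by
          have hh := hF_eq₁ (star (ch₂ v)) (ch₁ η) x
          rw [star_star] at hh
          rw [hch₁ η] at hh
          exact hh.symm
      _ = ⟪g₂ (ch₂ v), θ x (ρ (ch₁ η) ψ)⟫ := by
          have hh := hF_eq₂ (star (ch₂ v)) (ch₁ η) x
          rw [star_star] at hh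
          exact hh
      _ = ⟪(v : H₂), θ x η'⟫ := by rw [hg₂ch, hη']
end

section
/- In the setting of the GNS-like theorem (F hermitian on the *-bimodule X, f positive on A with |F(a⁺·x)|² ≤ C_x f(a⁺a), and (θ_F,ρ_f) the resulting representation), for x ∈ X the operator θ_F(x) is bounded on D_f if and only if there exists λ > 0 such that |F(a⁺·x·a)| ≤ λ f(a⁺a) for all a ∈ A. -/
open scoped ComplexInnerProductSpace

private lemma polar_id' {H : Type*} [NormedAddCommGroup H] [InnerProductSpace ℂ H]
    (D : Submodule ℂ H) (T : D →ₗ[ℂ] H) (ξ η : D) :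
    ⟪(ξ : H), T η⟫ =
      (⟪((ξ + η : D) : H), T (ξ + η)⟫ - ⟪((ξ - η : D) : H), T (ξ - η)⟫ -
        Complex.I * ⟪((ξ + Complex.I • η : D) : H), T (ξ + Complex.I • η)⟫ +
        Complex.I * ⟪((ξ - Complex.I • η : D) : H), T (ξ - Complex.I • η)⟫) / 4 := by
  simp only [map_add, map_sub, map_smul, Submodule.coe_add, Submodule.coe_sub,
    Submodule.coe_smul, inner_add_left, inner_add_right, inner_sub_left, inner_sub_right,
    inner_smul_left, inner_smul_right, Complex.conj_I]
  ring_nf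
  simp [Complex.I_sq]
  ring

private lemma polar_bound' {H : Type*} [NormedAddCommGroup H] [InnerProductSpace ℂ H]
    (D : Submodule ℂ H) (T : D →ₗ[ℂ] H) (M : ℝ) (hM : 0 ≤ M)
    (h : ∀ η : D, ‖⟪(η : H), T η⟫‖ ≤ M * ‖η‖ ^ 2) (ξ η : D) :
    ‖⟪(ξ : H), T η⟫‖ ≤ M * (‖ξ‖ ^ 2 + ‖η‖ ^ 2) := by
  have hpar : ‖ξ + η‖ ^ 2 + ‖ξ - η‖ ^ 2 = 2 * (‖ξ‖ ^ 2 + ‖η‖ ^ 2) := by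
    simpa [pow_two] using parallelogram_law_with_norm ℂ ξ η
  have hpar' : ‖ξ + Complex.I • η‖ ^ 2 + ‖ξ - Complex.I • η‖ ^ 2
      = 2 * (‖ξ‖ ^ 2 + ‖η‖ ^ 2) := by
    have h0 : ‖Complex.I • η‖ = ‖η‖ := by
      rw [norm_smul, Complex.norm_I, one_mul]
    have := parallelogram_law_with_norm ℂ ξ (Complex.I • η)
    rw [h0] at this
    simpa [pow_two] using this
  calc ‖⟪(ξ : H), T η⟫‖
      = ‖(⟪((ξ + η : D) : H), T (ξ + η)⟫ - ⟪((ξ - η : D) : H), T (ξ - η)⟫ -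
        Complex.I * ⟪((ξ + Complex.I • η : D) : H), T (ξ + Complex.I • η)⟫ +
        Complex.I * ⟪((ξ - Complex.I • η : D) : H), T (ξ - Complex.I • η)⟫) / 4‖ := by
        rw [← polar_id']
    _ ≤ (‖⟪((ξ + η : D) : H), T (ξ + η)⟫‖ + ‖⟪((ξ - η : D) : H), T (ξ - η)⟫‖ +
        ‖⟪((ξ + Complex.I • η : D) : H), T (ξ + Complex.I • η)⟫‖ +
        ‖⟪((ξ - Complex.I • η : D) : H), T (ξ - Complex.I • η)⟫‖) / 4 := by
        rw [norm_div]
        gcongr ?_ / ?_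
        · calc _ ≤ ‖⟪((ξ + η : D) : H), T (ξ + η)⟫ - ⟪((ξ - η : D) : H), T (ξ - η)⟫ -
              Complex.I * ⟪((ξ + Complex.I • η : D) : H), T (ξ + Complex.I • η)⟫‖ +
              ‖Complex.I * ⟪((ξ - Complex.I • η : D) : H), T (ξ - Complex.I • η)⟫‖ :=
              norm_add_le _ _
            _ ≤ _ := by
              rw [norm_mul, Complex.norm_I, one_mul]
              gcongr
              calc _ ≤ ‖⟪((ξ + η : D) : H), T (ξ + η)⟫ - ⟪((ξ - η : D) : H), T (ξ - η)⟫‖ +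
                  ‖Complex.I * ⟪((ξ + Complex.I • η : D) : H), T (ξ + Complex.I • η)⟫‖ :=
                  norm_sub_le _ _
                _ ≤ _ := by
                  rw [norm_mul, Complex.norm_I, one_mul]
                  gcongr
                  exact norm_sub_le _ _
        · simp
    _ ≤ (M * ‖ξ + η‖ ^ 2 + M * ‖ξ - η‖ ^ 2 + M * ‖ξ + Complex.I • η‖ ^ 2 +
        M * ‖ξ - Complex.I • η‖ ^ 2) / 4 := by gcongr <;> exact h _
    _ = M * (‖ξ‖ ^ 2 + ‖η‖ ^ 2) := by
        rw [div_eq_iff (by norm_num : (4:ℝ) ≠ 0)]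
        linear_combination M * hpar + M * hpar'

private lemma norm_le_of_inner_bound' {H : Type*} [NormedAddCommGroup H]
    [InnerProductSpace ℂ H] (D : Submodule ℂ H) (hD : Dense (D : Set H))
    (T : D →ₗ[ℂ] H) (M : ℝ) (hM : 0 ≤ M)
    (h : ∀ ξ η : D, ‖⟪(ξ : H), T η⟫‖ ≤ M * (‖ξ‖ ^ 2 + ‖η‖ ^ 2)) (η : D) :
    ‖T η‖ ≤ 2 * M * ‖η‖ := by
  rcases eq_or_ne η 0 with rfl | hη
  · simp
  have hη' : (0:ℝ) < ‖η‖ := norm_pos_iff.mpr hη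
  rcases eq_or_ne (T η) 0 with hT | hT
  · rw [hT, norm_zero]; positivity
  have hT' : (0:ℝ) < ‖T η‖ := norm_pos_iff.mpr hT
  have key : ‖η‖ * ‖T η‖ ≤ 2 * M * ‖η‖ ^ 2 := by
    apply le_of_forall_pos_le_add
    intro δ hδ
    set K : ℝ := M * (2 * ‖η‖ + 1) + ‖T η‖ + 1 with hK
    have hK0 : (0:ℝ) < K := by positivity
    set ε : ℝ := min (δ / K) 1 with hε
    have hε0 : (0:ℝ) < ε := lt_min (by positivity) one_pos
    have hε1 : ε ≤ 1 := min_le_right _ _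
    have hεδ : ε * K ≤ δ := by
      calc ε * K ≤ (δ / K) * K := by
            apply mul_le_mul_of_nonneg_right (min_le_left _ _) hK0.le
        _ = δ := div_mul_cancel₀ _ (ne_of_gt hK0)
    set u : H := ((‖η‖ / ‖T η‖ : ℝ) : ℂ) • T η with hu_def
    have hu : ‖u‖ = ‖η‖ := by
      rw [hu_def, norm_smul, Complex.norm_real, Real.norm_eq_abs,
        abs_of_pos (by positivity), div_mul_cancel₀ _ (ne_of_gt hT')]
    obtain ⟨ξ', hξ'D, hξ'lt⟩ := hD.exists_dist_lt u hε0
    set ξ : D := ⟨ξ', hξ'D⟩ with hxi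
    have hdist : ‖u - (ξ : H)‖ < ε := by rw [← dist_eq_norm]; exact hξ'lt
    have hTC : ((‖T η‖ : ℝ) : ℂ) ≠ 0 := by
      exact_mod_cast hT'.ne'
    have hval : (⟪u, T η⟫ : ℂ) = ((‖η‖ * ‖T η‖ : ℝ) : ℂ) := by
      rw [hu_def, inner_smul_left, inner_self_eq_norm_sq_to_K, Complex.conj_ofReal]
      push_cast
      field_simp
      ring_nf
      rfl
    have hnorm_u : ‖(⟪u, T η⟫ : ℂ)‖ = ‖η‖ * ‖T η‖ := by
      rw [hval, Complex.norm_real, Real.norm_eq_abs, abs_of_nonneg (by positivity)]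
    have hξnorm : ‖ξ‖ ≤ ‖η‖ + ε := by
      have h1 : ‖(ξ : H)‖ ≤ ‖u‖ + ‖u - (ξ : H)‖ := by
        calc ‖(ξ : H)‖ = ‖u - (u - (ξ : H))‖ := by congr 1; abel
          _ ≤ ‖u‖ + ‖u - (ξ : H)‖ := norm_sub_le _ _
      calc ‖ξ‖ = ‖(ξ : H)‖ := Submodule.coe_norm ξ
        _ ≤ ‖u‖ + ‖u - (ξ : H)‖ := h1
        _ ≤ ‖η‖ + ε := by rw [hu]; linarith [hdist.le]
    have hmain : ‖η‖ * ‖T η‖ ≤ M * (‖ξ‖ ^ 2 + ‖η‖ ^ 2) + ε * ‖T η‖ := by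
      have hsplit : ((ξ : H) + (u - (ξ : H))) = u := by abel
      calc ‖η‖ * ‖T η‖ = ‖(⟪u, T η⟫ : ℂ)‖ := hnorm_u.symm
        _ = ‖(⟪(ξ : H) + (u - (ξ : H)), T η⟫ : ℂ)‖ := by rw [hsplit]
        _ = ‖(⟪(ξ : H), T η⟫ : ℂ) + ⟪u - (ξ : H), T η⟫‖ := by rw [inner_add_left]
        _ ≤ ‖(⟪(ξ : H), T η⟫ : ℂ)‖ + ‖(⟪u - (ξ : H), T η⟫ : ℂ)‖ := norm_add_le _ _
        _ ≤ M * (‖ξ‖ ^ 2 + ‖η‖ ^ 2) + ε * ‖T η‖ := by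
            gcongr
            · exact h ξ η
            · calc ‖(⟪u - (ξ : H), T η⟫ : ℂ)‖ ≤ ‖u - (ξ : H)‖ * ‖T η‖ :=
                  norm_inner_le_norm _ _
                _ ≤ ε * ‖T η‖ := mul_le_mul_of_nonneg_right hdist.le (norm_nonneg _)
    have hξsq : ‖ξ‖ ^ 2 ≤ (‖η‖ + ε) ^ 2 := by
      have : (0:ℝ) ≤ ‖ξ‖ := norm_nonneg _
      nlinarith [hξnorm]
    nlinarith [hmain, hξsq, hεδ, hε1, hε0.le, hM, hT'.le, hη'.le,
      mul_nonneg hM hε0.le]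
  nlinarith [key, hη']

/-- In the setting of the GNS-like theorem, for `x ∈ X` the operator
`θ_F(x)` is bounded on the GNS domain `D_f` if and only if there exists `λ > 0`
such that `|F(a⁺·x·a)| ≤ λ f(a⁺a)` for all `a ∈ A`.
(The paper's inner product `⟨u,v⟩`, linear in `u`, is written as Mathlib's `⟪v, u⟫`.) -/
theorem gns_like_bounded_iff
    {A X : Type*} [Ring A] [Algebra ℂ A] [StarRing A] [StarModule ℂ A]
    [AddCommGroup X] [Module ℂ X]
    (s : X → X)
    (hs_invol : ∀ x : X, s (s x) = x)
    (l : A → X → X) (r : X → A → X)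
    (hl_one : ∀ x, l 1 x = x) (hl_mul : ∀ a b x, l a (l b x) = l (a * b) x)
    (hr_one : ∀ x, r x 1 = x) (hr_mul : ∀ a b x, r (r x a) b = r x (a * b))
    (h_comm : ∀ a b x, r (l a x) b = l a (r x b))
    (h_star : ∀ (a b : A) (x : X), s (l a (r x b)) = l (star b) (r (s x) (star a)))
    -- F hermitian, f positive, and the domination condition of the GNS-like theorem
    (F : X →ₗ[ℂ] ℂ) (hF_her : ∀ x : X, F (s x) = (starRingEnd ℂ) (F x))
    (f : A →ₗ[ℂ] ℂ) (hf_pos : ∀ a : A, 0 ≤ (f (star a * a)).re ∧ (f (star a * a)).im = 0)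
    (h_dom : ∀ x : X, ∃ C : ℝ, 0 < C ∧
      ∀ a : A, ‖F (l (star a) x)‖ ^ 2 ≤ C * (f (star a * a)).re)
    -- the resulting GNS-like representation (θF, ρf) on D_f with cyclic vector φf
    {H : Type*} [NormedAddCommGroup H] [InnerProductSpace ℂ H] [CompleteSpace H]
    (Df : Submodule ℂ H) (hDf : Dense (Df : Set H))
    (ρf : A → (Df →ₗ[ℂ] Df)) (θF : X →ₗ[ℂ] (Df →ₗ[ℂ] H))
    (hρf_one : ρf 1 = LinearMap.id)
    (hρf_mul : ∀ a b : A, ρf (a * b) = (ρf a) ∘ₗ (ρf b))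
    (hρf_adj : ∀ (a : A) (ξ η : Df), ⟪(η : H), (ρf a ξ : H)⟫ = ⟪(ρf (star a) η : H), (ξ : H)⟫)
    (hθF_star : ∀ (x : X) (ξ η : Df), ⟪(η : H), θF (s x) ξ⟫ = ⟪θF x η, (ξ : H)⟫)
    (hrep : ∀ (a b : A) (x : X) (ξ η : Df),
      ⟪(η : H), θF (l a (r x b)) ξ⟫ = ⟪(ρf (star a) η : H), θF x (ρf b ξ)⟫)
    (φf : Df) (hcyc : ∀ ξ : Df, ∃ a : A, ρf a φf = ξ)
    (hf_eq : ∀ a : A, f a = ⟪(φf : H), (ρf a φf : H)⟫)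
    (hF_eq : ∀ (a b : A) (x : X), F (l a (r x b)) = ⟪(ρf (star a) φf : H), θF x (ρf b φf)⟫)
    (x : X) :
    (∃ c : ℝ, 0 ≤ c ∧ ∀ η : Df, ‖θF x η‖ ≤ c * ‖η‖) ↔
      (∃ lam : ℝ, 0 < lam ∧
        ∀ a : A, ‖F (l (star a) (r x a))‖ ≤ lam * (f (star a * a)).re) := by
  have hFval : ∀ a : A, F (l (star a) (r x a)) = ⟪(ρf a φf : H), θF x (ρf a φf)⟫ := by
    intro a
    rw [hF_eq (star a) a x, star_star]
  have hfval : ∀ a : A, (f (star a * a)).re = ‖ρf a φf‖ ^ 2 := by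
    intro a
    have h1 : f (star a * a) = ⟪(ρf a φf : H), (ρf a φf : H)⟫ := by
      rw [hf_eq, hρf_mul]
      simp only [LinearMap.comp_apply]
      rw [hρf_adj (star a) (ρf a φf) φf, star_star]
    have h2 : (⟪(ρf a φf : H), (ρf a φf : H)⟫ : ℂ)
        = ((‖(ρf a φf : H)‖ ^ 2 : ℝ) : ℂ) := by
      rw [inner_self_eq_norm_sq_to_K]; norm_cast
    rw [h1, h2, Complex.ofReal_re, Submodule.coe_norm]
  constructor
  · rintro ⟨c, hc0, hb⟩
    refine ⟨c + 1, by linarith, fun a => ?_⟩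
    set η : Df := ρf a φf with hη
    have h1 : ‖F (l (star a) (r x a))‖ = ‖(⟪(η : H), θF x η⟫ : ℂ)‖ := by
      rw [hFval a]
    have h2 : ‖(⟪(η : H), θF x η⟫ : ℂ)‖ ≤ ‖η‖ * ‖θF x η‖ := by
      calc _ ≤ ‖(η : H)‖ * ‖θF x η‖ := norm_inner_le_norm _ _
        _ = _ := by rw [Submodule.coe_norm]
    have h3 : ‖θF x η‖ ≤ c * ‖η‖ := hb η
    rw [h1, hfval a, ← hη]
    calc ‖(⟪(η : H), θF x η⟫ : ℂ)‖ ≤ ‖η‖ * (c * ‖η‖) := by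
          calc _ ≤ ‖η‖ * ‖θF x η‖ := h2
            _ ≤ ‖η‖ * (c * ‖η‖) := by gcongr
      _ = c * ‖η‖ ^ 2 := by ring
      _ ≤ (c + 1) * ‖η‖ ^ 2 := by nlinarith [sq_nonneg ‖η‖]
  · rintro ⟨lam, hlam, hb⟩
    refine ⟨2 * lam, by linarith, fun a => ?_⟩
    have hlam2 : (0:ℝ) ≤ 2 * lam := by linarith
    have hq : ∀ η : Df, ‖(⟪(η : H), θF x η⟫ : ℂ)‖ ≤ lam * ‖η‖ ^ 2 := by
      intro η
      obtain ⟨b, hbeq⟩ := hcyc η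
      have hb' := hb b
      rw [hfval b, hbeq] at hb'
      calc ‖(⟪(η : H), θF x η⟫ : ℂ)‖
          = ‖F (l (star b) (r x b))‖ := by
            rw [hFval b, hbeq]
        _ ≤ lam * ‖η‖ ^ 2 := hb'
    have hbound := norm_le_of_inner_bound' Df hDf (θF x) lam (le_of_lt hlam)
      (polar_bound' Df (θF x) lam (le_of_lt hlam) hq)
    exact hbound a
end
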